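/- Let F be a division ring and Λ = {α₁, …, αₙ} ⊂ F a set such that pᵢ^ℓ(αᵢ) ≠ 0 for each i, where pᵢ is the left minimal polynomial of Λ∖{αᵢ} (the monic generator of the right ideal of polynomials left-vanishing on Λ∖{αᵢ}). Then for any c₁, …, cₙ ∈ F, the polynomial f(z) = Σᵢ pᵢ(z)·pᵢ^ℓ(αᵢ)⁻¹·cᵢ satisfies f^ℓ(αᵢ) = cᵢ for all i. -/
import Mathlib


open Polynomial

/-- Left evaluation of a polynomial `f = Σ zʲ fⱼ` at `a`: `f^ℓ(a) = Σ aʲ fⱼ`.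
(Mathlib's `Polynomial.eval` is the right evaluation `Σ fⱼ aʲ`.) -/
noncomputable def lEval {F : Type*} [DivisionRing F] (a : F) (f : F[X]) : F :=
  f.sum fun j c => a ^ j * c

/-- p is the left minimal polynomial of Δ: the monic generator of the right ideal
of polynomials left-vanishing on Δ. -/
def IsLeftMinPoly {F : Type*} [DivisionRing F] (Δ : Set F) (p : F[X]) : Prop :=
  p.Monic ∧ (∀ a ∈ Δ, lEval a p = 0) ∧
    ∀ f : F[X], (∀ a ∈ Δ, lEval a f = 0) → ∃ h : F[X], f = p * h

lemma lEval_range {F : Type*} [DivisionRing F] (a : F) (f : F[X]) (N : ℕ)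
    (hN : f.natDegree < N) : lEval a f = ∑ j ∈ Finset.range N, a ^ j * f.coeff j := by
  unfold lEval
  exact f.sum_over_range' (fun _ => mul_zero _) N hN

lemma lEval_mul_C {F : Type*} [DivisionRing F] (a : F) (f : F[X]) (r : F) :
    lEval a (f * C r) = lEval a f * r := by
  rw [lEval_range a f (f.natDegree + 1) (Nat.lt_succ_self _),
      lEval_range a (f * C r) (f.natDegree + 1)
        (Nat.lt_succ_of_le (natDegree_mul_C_le f r)), Finset.sum_mul]
  simp [coeff_mul_C, mul_assoc]

lemma lEval_add {F : Type*} [DivisionRing F] (a : F) (f g : F[X]) :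
    lEval a (f + g) = lEval a f + lEval a g := by
  unfold lEval
  rw [Polynomial.sum_add_index] <;> simp [mul_add]

noncomputable def lEvalHom {F : Type*} [DivisionRing F] (a : F) : F[X] →+ F where
  toFun := lEval a
  map_zero' := by simp [lEval]
  map_add' := lEval_add a

/-- Left Lagrange interpolation formula: with pᵢ the left minimal polynomial of
Λ∖{αᵢ} and pᵢ^ℓ(αᵢ) ≠ 0, the polynomial f = Σᵢ pᵢ·pᵢ^ℓ(αᵢ)⁻¹·cᵢ satisfies
f^ℓ(αᵢ) = cᵢ for all i. -/
theorem stmt8 {F : Type*} [DivisionRing F] (n : ℕ) (α : Fin n → F)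
    (hα : Function.Injective α) (p : Fin n → F[X])
    (hp : ∀ i, IsLeftMinPoly {x | ∃ j, j ≠ i ∧ x = α j} (p i))
    (hne : ∀ i, lEval (α i) (p i) ≠ 0) (c : Fin n → F) :
    ∀ i, lEval (α i) (∑ j, p j * C ((lEval (α j) (p j))⁻¹ * c j)) = c i := by
  intro i
  have : lEval (α i) (∑ j, p j * C ((lEval (α j) (p j))⁻¹ * c j)) =
      ∑ j, lEval (α i) (p j * C ((lEval (α j) (p j))⁻¹ * c j)) :=
    map_sum (lEvalHom (α i)) _ _
  rw [this, Finset.sum_eq_single i]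
  · rw [lEval_mul_C, ← mul_assoc, mul_inv_cancel₀ (hne i), one_mul]
  · intro j _ hj
    rw [lEval_mul_C]
    have h0 : lEval (α i) (p j) = 0 := (hp j).2.1 (α i) ⟨i, fun h => hj (h ▸ rfl), rfl⟩
    rw [h0, zero_mul]
  · simp
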